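/- Second estimate of (5.13) in operator form: let K be a self-adjoint continuous linear operator on E (playing the role of ρκ) and set B = P ∘ (id − K) ∘ P_h + n⊗n_h. Then ‖Bᵀ B − id‖ ≤ ‖n − n_h‖² + 4 ‖K‖ + ‖K‖², where Bᵀ denotes the adjoint of B. -/

import Mathlib

open scoped RealInnerProductSpace

/-- The rank-one operator `a ⊗ b : x ↦ ⟨b, x⟩ a` on a real inner product space. -/
noncomputable def rankOne {E : Type*} [NormedAddCommGroup E] [InnerProductSpace ℝ E]
    (a b : E) : E →L[ℝ] E :=
  (innerSL ℝ b).smulRight a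

/-- For a unit vector `m`, the orthogonal projection `P_m = id − m ⊗ m`
onto the orthogonal complement of `m`. -/
noncomputable def projPerp {E : Type*} [NormedAddCommGroup E] [InnerProductSpace ℝ E]
    (m : E) : E →L[ℝ] E :=
  ContinuousLinearMap.id ℝ E - rankOne m m

section Aux
open ContinuousLinearMap
variable {E : Type*} [NormedAddCommGroup E] [InnerProductSpace ℝ E]

lemma rankOne_apply (a b x : E) : rankOne a b x = ⟪b, x⟫ • a := rfl

lemma projPerp_apply (m x : E) : projPerp m x = x - ⟪m, x⟫ • m := rfl

lemma norm_rankOne_le (a b : E) : ‖rankOne a b‖ ≤ ‖a‖ * ‖b‖ := by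
  refine opNorm_le_bound _ (by positivity) fun x => ?_
  rw [rankOne_apply, norm_smul]
  calc ‖⟪b, x⟫‖ * ‖a‖ ≤ (‖b‖ * ‖x‖) * ‖a‖ := by
        gcongr; exact norm_inner_le_norm b x
    _ = ‖a‖ * ‖b‖ * ‖x‖ := by ring

lemma norm_projPerp_apply_le (m : E) (hm : ‖m‖ = 1) (x : E) : ‖projPerp m x‖ ≤ ‖x‖ := by
  have h : ‖projPerp m x‖ ^ 2 = ‖x‖ ^ 2 - ⟪m, x⟫ ^ 2 := by
    rw [projPerp_apply, ← real_inner_self_eq_norm_sq, ← real_inner_self_eq_norm_sq]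
    simp only [inner_sub_left, inner_sub_right, real_inner_smul_left, real_inner_smul_right,
      real_inner_self_eq_norm_sq, hm, real_inner_comm m x]
    rw [norm_smul, mul_pow, Real.norm_eq_abs, sq_abs, hm]
    ring
  nlinarith [norm_nonneg (projPerp m x), norm_nonneg x, sq_nonneg (⟪m, x⟫ : ℝ)]

lemma norm_projPerp_le (m : E) (hm : ‖m‖ = 1) : ‖projPerp m‖ ≤ 1 := by
  refine opNorm_le_bound _ zero_le_one fun x => ?_
  simpa using norm_projPerp_apply_le m hm x

lemma comp_rankOne (C : E →L[ℝ] E) (a b : E) : C ∘L rankOne a b = rankOne (C a) b := by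
  ext x; simp [rankOne_apply, map_smul]

lemma projPerp_self (m : E) (hm : ‖m‖ = 1) : projPerp m m = 0 := by
  simp [projPerp_apply, real_inner_self_eq_norm_sq, hm]

lemma projPerp_mul_self (m : E) (hm : ‖m‖ = 1) : projPerp m * projPerp m = projPerp m := by
  ext x
  simp only [ContinuousLinearMap.mul_apply, projPerp_apply, inner_sub_right, real_inner_smul_right,
    real_inner_self_eq_norm_sq, hm]
  rw [one_pow, mul_one]
  module

variable [CompleteSpace E]

lemma adjoint_rankOne (a b : E) : adjoint (rankOne a b) = rankOne b a := by
  symm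
  rw [eq_adjoint_iff]
  intro x y
  simp [rankOne_apply, real_inner_smul_left, real_inner_smul_right, real_inner_comm a x]
  ring

lemma isSelfAdjoint_projPerp (m : E) : IsSelfAdjoint (projPerp m) := by
  rw [IsSelfAdjoint, star_eq_adjoint, projPerp, map_sub, adjoint_id, adjoint_rankOne]

lemma rankOne_comp (a b : E) (C : E →L[ℝ] E) :
    (rankOne a b) ∘L C = rankOne a (adjoint C b) := by
  ext x; simp [rankOne_apply, adjoint_inner_left]

lemma rankOne_zero_left (b : E) : rankOne (0 : E) b = 0 := by
  ext x; simp [rankOne_apply]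

lemma rankOne_zero_right (a : E) : rankOne a (0 : E) = 0 := by
  ext x; simp [rankOne_apply]

lemma norm_conj_le (Q C : E →L[ℝ] E) (hQ : ‖Q‖ ≤ 1) : ‖Q * C * Q‖ ≤ ‖C‖ := by
  calc ‖Q * C * Q‖ ≤ ‖Q * C‖ * ‖Q‖ := norm_mul_le _ _
    _ ≤ (‖Q‖ * ‖C‖) * ‖Q‖ := by gcongr; exact norm_mul_le _ _
    _ ≤ (1 * ‖C‖) * 1 := by gcongr
    _ = ‖C‖ := by ring

end Aux

open ContinuousLinearMap

/-- Second estimate of (5.13) in operator form: for a self-adjoint continuous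
operator `K` (playing the role of `ρκ`) and `B = P ∘ (id − K) ∘ P_h + n ⊗ n_h`,
one has `‖Bᵀ B − id‖ ≤ ‖n − n_h‖² + 4 ‖K‖ + ‖K‖²`. -/
theorem transfer_op_gram_minus_id_bound
    {E : Type*} [NormedAddCommGroup E] [InnerProductSpace ℝ E] [CompleteSpace E]
    (n nh : E) (hn : ‖n‖ = 1) (hnh : ‖nh‖ = 1)
    (K : E →L[ℝ] E) (hK : IsSelfAdjoint K) :
    ‖(ContinuousLinearMap.adjoint
          ((projPerp n).comp ((ContinuousLinearMap.id ℝ E - K).comp (projPerp nh))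
            + rankOne n nh)).comp
        ((projPerp n).comp ((ContinuousLinearMap.id ℝ E - K).comp (projPerp nh))
          + rankOne n nh)
        - ContinuousLinearMap.id ℝ E‖
      ≤ ‖n - nh‖ ^ 2 + 4 * ‖K‖ + ‖K‖ ^ 2 := by
  set P := projPerp n with hPdef
  set Ph := projPerp nh with hPhdef
  set B : E →L[ℝ] E := P * ((1 - K) * Ph) + rankOne n nh with hBdef
  show ‖adjoint B * B - 1‖ ≤ ‖n - nh‖ ^ 2 + 4 * ‖K‖ + ‖K‖ ^ 2
  -- adjoint facts
  have hA : adjoint (1 - K : E →L[ℝ] E) = 1 - K := by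
    rw [← star_eq_adjoint, star_sub, star_one, hK.star_eq]
  have hBadj : adjoint B = Ph * ((1 - K) * P) + rankOne nh n := by
    rw [hBdef, map_add, adjoint_rankOne, ← star_eq_adjoint, star_mul, star_mul,
      (isSelfAdjoint_projPerp n).star_eq, (isSelfAdjoint_projPerp nh).star_eq,
      star_sub, star_one, hK.star_eq]
    noncomm_ring
  -- algebraic relations
  have hPP : P * P = P := projPerp_mul_self n hn
  have hPhPh : Ph * Ph = Ph := projPerp_mul_self nh hnh
  have h1 : P * rankOne n nh = 0 := by
    rw [mul_def, comp_rankOne, projPerp_self n hn, rankOne_zero_left]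
  have h2 : rankOne nh n * P = 0 := by
    rw [mul_def, rankOne_comp, (isSelfAdjoint_projPerp n).adjoint_eq,
      projPerp_self n hn, rankOne_zero_right]
  have h3 : rankOne nh n * rankOne n nh = rankOne nh nh := by
    ext x
    simp [mul_apply, rankOne_apply, real_inner_smul_right, real_inner_self_eq_norm_sq, hn]
  have h4 : Ph * rankOne n n * Ph = rankOne (Ph n) (Ph n) := by
    rw [mul_def, mul_def, comp_rankOne, rankOne_comp,
      (isSelfAdjoint_projPerp nh).adjoint_eq]
  have hP1 : P = 1 - rankOne n n := rfl
  have hPh1 : Ph = 1 - rankOne nh nh := rfl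
  -- the key identity
  have key : adjoint B * B - 1
      = -(rankOne (Ph n) (Ph n)) - Ph * (K * P) * Ph - Ph * (P * K) * Ph
        + Ph * (K * P * K) * Ph := by
    rw [hBadj, hBdef]
    have expand : (Ph * ((1 - K) * P) + rankOne nh n) * (P * ((1 - K) * Ph) + rankOne n nh)
        = Ph * (1 - K) * (P * P) * (1 - K) * Ph
          + Ph * ((1 - K) * (P * rankOne n nh))
          + rankOne nh n * P * ((1 - K) * Ph)
          + rankOne nh n * rankOne n nh := by noncomm_ring
    rw [expand, hPP, h1, h2, h3]
    have expand2 : Ph * (1 - K) * P * (1 - K) * Ph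
        = Ph * P * Ph - Ph * (K * P) * Ph - Ph * (P * K) * Ph + Ph * (K * P * K) * Ph := by
      noncomm_ring
    have hPhPPh : Ph * P * Ph = Ph - rankOne (Ph n) (Ph n) := by
      rw [hP1]
      have : Ph * (1 - rankOne n n) * Ph = Ph * Ph - Ph * rankOne n n * Ph := by noncomm_ring
      rw [this, hPhPh, h4]
    rw [expand2, hPhPPh, hPh1]
    noncomm_ring
  rw [key]
  -- norm estimates
  have hPn : ‖P‖ ≤ 1 := norm_projPerp_le n hn
  have hPhn : ‖Ph‖ ≤ 1 := norm_projPerp_le nh hnh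
  have hR : ‖rankOne (Ph n) (Ph n)‖ ≤ ‖n - nh‖ ^ 2 := by
    have hPhnnh : Ph n = Ph (n - nh) := by
      rw [map_sub, projPerp_self nh hnh, sub_zero]
    have h5 : ‖Ph n‖ ≤ ‖n - nh‖ := by
      rw [hPhnnh]; exact norm_projPerp_apply_le nh hnh _
    calc ‖rankOne (Ph n) (Ph n)‖ ≤ ‖Ph n‖ * ‖Ph n‖ := norm_rankOne_le _ _
      _ ≤ ‖n - nh‖ * ‖n - nh‖ := by gcongr
      _ = ‖n - nh‖ ^ 2 := by ring
  have hT1 : ‖Ph * (K * P) * Ph‖ ≤ ‖K‖ := by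
    refine le_trans (norm_conj_le _ _ hPhn) ?_
    calc ‖K * P‖ ≤ ‖K‖ * ‖P‖ := norm_mul_le _ _
      _ ≤ ‖K‖ * 1 := by gcongr
      _ = ‖K‖ := mul_one _
  have hT2 : ‖Ph * (P * K) * Ph‖ ≤ ‖K‖ := by
    refine le_trans (norm_conj_le _ _ hPhn) ?_
    calc ‖P * K‖ ≤ ‖P‖ * ‖K‖ := norm_mul_le _ _
      _ ≤ 1 * ‖K‖ := by gcongr
      _ = ‖K‖ := one_mul _
  have hT3 : ‖Ph * (K * P * K) * Ph‖ ≤ ‖K‖ ^ 2 := by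
    refine le_trans (norm_conj_le _ _ hPhn) ?_
    calc ‖K * P * K‖ ≤ ‖K * P‖ * ‖K‖ := norm_mul_le _ _
      _ ≤ (‖K‖ * ‖P‖) * ‖K‖ := by gcongr; exact norm_mul_le _ _
      _ ≤ (‖K‖ * 1) * ‖K‖ := by gcongr
      _ = ‖K‖ ^ 2 := by ring
  have tri : ‖-(rankOne (Ph n) (Ph n)) - Ph * (K * P) * Ph - Ph * (P * K) * Ph
        + Ph * (K * P * K) * Ph‖
      ≤ ‖rankOne (Ph n) (Ph n)‖ + ‖Ph * (K * P) * Ph‖ + ‖Ph * (P * K) * Ph‖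
        + ‖Ph * (K * P * K) * Ph‖ := by
    refine le_trans (norm_add_le _ _) ?_
    gcongr
    refine le_trans (norm_sub_le _ _) ?_
    gcongr
    refine le_trans (norm_sub_le _ _) ?_
    simp
  refine le_trans tri ?_
  have := norm_nonneg K
  linarith
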